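/- Let λ > μ > ν > ρ > σ > τ be real numbers. For c ∈ {ν, ρ, τ} define v_c = (c−λ)/((λ−σ)(c−σ)) and w_c = (σ−μ)/((c−σ)(c−μ)). Then each w_c is nonzero and 1 − v_ν/w_ν − v_ρ/w_ρ − v_τ/w_τ > 0. Consequently, if real numbers d₅, d_ν, d_ρ, d_τ satisfy v_c·d₅ + w_c·d_c = 0 for each c ∈ {ν, ρ, τ} and d₅ + d_ν + d_ρ + d_τ = 0, then d₅ = d_ν = d_ρ = d_τ = 0. [Lemma 7.1 of the paper: at a suitable critical point of a closed CMC Dupin hypersurface with g = 6 and constant Lie curvatures, the derivatives e₁(λ_i) all vanish.] -/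

import Mathlib

/-- Auxiliary linear-algebra lemma: if `W i ≠ 0`, `V i * d₅ + W i * d i = 0`,
the sum of all four derivatives vanishes, and `1 - Σ V i / W i > 0`, then
all derivatives vanish. -/
lemma g6_aux (V1 W1 V2 W2 V3 W3 : ℝ) (hW1 : W1 ≠ 0) (hW2 : W2 ≠ 0) (hW3 : W3 ≠ 0)
    (hkey : 1 - V1 / W1 - V2 / W2 - V3 / W3 > 0)
    (d₅ d1 d2 d3 : ℝ)
    (g1 : V1 * d₅ + W1 * d1 = 0) (g2 : V2 * d₅ + W2 * d2 = 0)
    (g3 : V3 * d₅ + W3 * d3 = 0) (gs : d₅ + d1 + d2 + d3 = 0) :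
    d₅ = 0 ∧ d1 = 0 ∧ d2 = 0 ∧ d3 = 0 := by
  have hd1 : d1 = -(V1 / W1) * d₅ := by
    field_simp
    linarith
  have hd2 : d2 = -(V2 / W2) * d₅ := by
    field_simp
    linarith
  have hd3 : d3 = -(V3 / W3) * d₅ := by
    field_simp
    linarith
  have hz : d₅ * (1 - V1 / W1 - V2 / W2 - V3 / W3) = 0 := by
    rw [hd1, hd2, hd3] at gs
    linarith
  have hd5 : d₅ = 0 := by
    rcases mul_eq_zero.mp hz with h | h
    · exact h
    · exact absurd h (ne_of_gt hkey)
  refine ⟨hd5, ?_, ?_, ?_⟩ <;> simp [hd1, hd2, hd3, hd5]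

/-- Lemma 7.1: at a suitable critical point of a closed CMC Dupin hypersurface
with `g = 6` and constant Lie curvatures, the derivatives `e₁(λᵢ)` all vanish.
Here `l > mu > nu > rho > sg > ta` are the six principal curvatures, and for
`c ∈ {nu, rho, ta}` we set `v c = (c − l)/((l − sg)(c − sg))` and
`w c = (sg − mu)/((c − sg)(c − mu))`. -/
theorem g6_derivatives_vanish
    (l mu nu rho sg ta : ℝ)
    (h1 : l > mu) (h2 : mu > nu) (h3 : nu > rho) (h4 : rho > sg) (h5 : sg > ta) :
    ((sg - mu) / ((nu - sg) * (nu - mu)) ≠ 0) ∧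
    ((sg - mu) / ((rho - sg) * (rho - mu)) ≠ 0) ∧
    ((sg - mu) / ((ta - sg) * (ta - mu)) ≠ 0) ∧
    (1 - ((nu - l) / ((l - sg) * (nu - sg))) / ((sg - mu) / ((nu - sg) * (nu - mu)))
       - ((rho - l) / ((l - sg) * (rho - sg))) / ((sg - mu) / ((rho - sg) * (rho - mu)))
       - ((ta - l) / ((l - sg) * (ta - sg))) / ((sg - mu) / ((ta - sg) * (ta - mu)))
       > 0) ∧
    (∀ d₅ dnu drho dta : ℝ,
      ((nu - l) / ((l - sg) * (nu - sg))) * d₅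
        + ((sg - mu) / ((nu - sg) * (nu - mu))) * dnu = 0 →
      ((rho - l) / ((l - sg) * (rho - sg))) * d₅
        + ((sg - mu) / ((rho - sg) * (rho - mu))) * drho = 0 →
      ((ta - l) / ((l - sg) * (ta - sg))) * d₅
        + ((sg - mu) / ((ta - sg) * (ta - mu))) * dta = 0 →
      d₅ + dnu + drho + dta = 0 →
      d₅ = 0 ∧ dnu = 0 ∧ drho = 0 ∧ dta = 0) := by
  have hsm : sg - mu < 0 := by linarith
  have hls : (0:ℝ) < l - sg := by linarith
  have hns : (0:ℝ) < nu - sg := by linarith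
  have hnm : nu - mu < 0 := by linarith
  have hrs : (0:ℝ) < rho - sg := by linarith
  have hrm : rho - mu < 0 := by linarith
  have hts : ta - sg < 0 := by linarith
  have htm : ta - mu < 0 := by linarith
  have hnl : nu - l < 0 := by linarith
  have hrl : rho - l < 0 := by linarith
  have htl : ta - l < 0 := by linarith
  have hsm' : sg - mu ≠ 0 := ne_of_lt hsm
  have hls' : l - sg ≠ 0 := ne_of_gt hls
  have hns' : nu - sg ≠ 0 := ne_of_gt hns
  have hnm' : nu - mu ≠ 0 := ne_of_lt hnm
  have hrs' : rho - sg ≠ 0 := ne_of_gt hrs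
  have hrm' : rho - mu ≠ 0 := ne_of_lt hrm
  have hts' : ta - sg ≠ 0 := ne_of_lt hts
  have htm' : ta - mu ≠ 0 := ne_of_lt htm
  have hw1 : (0:ℝ) < (sg - mu) / ((nu - sg) * (nu - mu)) :=
    div_pos_of_neg_of_neg hsm (mul_neg_of_pos_of_neg hns hnm)
  have hw2 : (0:ℝ) < (sg - mu) / ((rho - sg) * (rho - mu)) :=
    div_pos_of_neg_of_neg hsm (mul_neg_of_pos_of_neg hrs hrm)
  have hw3 : (sg - mu) / ((ta - sg) * (ta - mu)) < 0 :=
    div_neg_of_neg_of_pos hsm (mul_pos_of_neg_of_neg hts htm)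
  have hw1' : (sg - mu) / ((nu - sg) * (nu - mu)) ≠ 0 := ne_of_gt hw1
  have hw2' : (sg - mu) / ((rho - sg) * (rho - mu)) ≠ 0 := ne_of_gt hw2
  have hw3' : (sg - mu) / ((ta - sg) * (ta - mu)) ≠ 0 := ne_of_lt hw3
  -- simplified forms of the quotients v/w
  have e1 : ((nu - l) / ((l - sg) * (nu - sg))) / ((sg - mu) / ((nu - sg) * (nu - mu)))
      = (nu - l) * (nu - mu) / ((l - sg) * (sg - mu)) := by
    rw [div_div_div_eq]
    field_simp
  have e2 : ((rho - l) / ((l - sg) * (rho - sg))) / ((sg - mu) / ((rho - sg) * (rho - mu)))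
      = (rho - l) * (rho - mu) / ((l - sg) * (sg - mu)) := by
    rw [div_div_div_eq]
    field_simp
  have e3 : ((ta - l) / ((l - sg) * (ta - sg))) / ((sg - mu) / ((ta - sg) * (ta - mu)))
      = (ta - l) * (ta - mu) / ((l - sg) * (sg - mu)) := by
    rw [div_div_div_eq]
    field_simp
  have q1 : (nu - l) * (nu - mu) / ((l - sg) * (sg - mu)) < 0 :=
    div_neg_of_pos_of_neg (mul_pos_of_neg_of_neg hnl hnm) (mul_neg_of_pos_of_neg hls hsm)
  have q2 : (rho - l) * (rho - mu) / ((l - sg) * (sg - mu)) < 0 :=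
    div_neg_of_pos_of_neg (mul_pos_of_neg_of_neg hrl hrm) (mul_neg_of_pos_of_neg hls hsm)
  have q3 : (ta - l) * (ta - mu) / ((l - sg) * (sg - mu)) < 0 :=
    div_neg_of_pos_of_neg (mul_pos_of_neg_of_neg htl htm) (mul_neg_of_pos_of_neg hls hsm)
  have hkey : 1 - ((nu - l) / ((l - sg) * (nu - sg))) / ((sg - mu) / ((nu - sg) * (nu - mu)))
       - ((rho - l) / ((l - sg) * (rho - sg))) / ((sg - mu) / ((rho - sg) * (rho - mu)))
       - ((ta - l) / ((l - sg) * (ta - sg))) / ((sg - mu) / ((ta - sg) * (ta - mu)))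
       > 0 := by
    rw [e1, e2, e3]; linarith
  exact ⟨hw1', hw2', hw3', hkey, fun d₅ dnu drho dta g1 g2 g3 gs =>
    g6_aux _ _ _ _ _ _ hw1' hw2' hw3' hkey d₅ dnu drho dta g1 g2 g3 gs⟩
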